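/- Let A, B be symmetric positive-definite n×n matrices with μ₀I ≤ A, B ≤ μ₁I, let θ ∈ [0,1] and H a symmetric positive semidefinite matrix with trace 1. Then the matrix I + θ·B^{-1/2}HB^{-1/2}(A−B) is nonsingular; in fact det(I + θB^{-1/2}HB^{-1/2}(A−B)) ≥ ((θμ₀+(1−θ)μ₁)/μ₁)^n > 0. -/

import Mathlib

open Matrix

private lemma posSemidef_smul' {n : ℕ} {M : Matrix (Fin n) (Fin n) ℝ} (hM : M.PosSemidef)
    {c : ℝ} (hc : 0 ≤ c) : (c • M).PosSemidef := by
  refine ⟨?_, fun x => ?_⟩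
  · simpa [IsHermitian, conjTranspose_smul] using congrArg (c • ·) hM.1.eq
  · exact (hM.smul hc).2 x

private lemma eigenvalues_ge' {n : ℕ} {M : Matrix (Fin n) (Fin n) ℝ} (hM : M.IsHermitian) {t : ℝ}
    (h : (M - t • (1 : Matrix (Fin n) (Fin n) ℝ)).PosSemidef) (i : Fin n) :
    t ≤ hM.eigenvalues i := by
  set v : Fin n → ℝ := ⇑(hM.eigenvectorBasis i) with hv
  have hvv : v ⬝ᵥ v = 1 := by
    have h2 : (inner ℝ (hM.eigenvectorBasis i) (hM.eigenvectorBasis i) : ℝ) = 1 := by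
      rw [real_inner_self_eq_norm_sq, hM.eigenvectorBasis.orthonormal.1 i]; norm_num
    rw [PiLp.inner_apply] at h2
    simpa [dotProduct, hv, mul_comm, ← sq] using h2
  have h2 := h.dotProduct_mulVec_nonneg v
  have h3 : hM.eigenvalues i = v ⬝ᵥ (M *ᵥ v) := by
    simpa [hv] using hM.eigenvalues_eq i
  simp only [star_trivial, sub_mulVec, dotProduct_sub, smul_mulVec, one_mulVec,
    dotProduct_smul, smul_eq_mul, hvv, mul_one, ← h3, sub_nonneg] at h2
  exact h2

private lemma det_ge' {n : ℕ} {M : Matrix (Fin n) (Fin n) ℝ} (hM : M.IsHermitian) {t : ℝ}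
    (ht : 0 ≤ t) (h : (M - t • (1 : Matrix (Fin n) (Fin n) ℝ)).PosSemidef) :
    t ^ n ≤ M.det := by
  have hdet : M.det = ∏ i, hM.eigenvalues i := by simpa using hM.det_eq_prod_eigenvalues
  have hpn : t ^ n = ∏ _i : Fin n, t := by simp
  rw [hdet, hpn]
  exact Finset.prod_le_prod (fun i _ => ht) (fun i _ => eigenvalues_ge' hM h i)

private lemma one_sub_psd' {n : ℕ} {H : Matrix (Fin n) (Fin n) ℝ} (hH : H.PosSemidef)
    (htr : H.trace = 1) : ((1 : Matrix (Fin n) (Fin n) ℝ) - H).PosSemidef := by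
  set U : Matrix (Fin n) (Fin n) ℝ := (hH.1.eigenvectorUnitary : Matrix (Fin n) (Fin n) ℝ) with hU
  have htr' : ∑ i, hH.1.eigenvalues i = 1 := by
    have : H.trace = ∑ i, hH.1.eigenvalues i := by
      conv_lhs => rw [hH.1.spectral_theorem, Unitary.conjStarAlgAut_apply]
      rw [trace_mul_cycle]
      rw [Unitary.coe_star_mul_self, Matrix.one_mul, trace_diagonal]
      simp
    rwa [htr, eq_comm] at this
  have hle : ∀ i, hH.1.eigenvalues i ≤ 1 := by
    intro i
    rw [← htr']
    exact Finset.single_le_sum (fun j _ => hH.eigenvalues_nonneg j) (Finset.mem_univ i)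
  have hdecomp : (1 : Matrix (Fin n) (Fin n) ℝ) - H
      = U * diagonal (fun i => 1 - hH.1.eigenvalues i) * star U := by
    conv_lhs => rw [hH.1.spectral_theorem, Unitary.conjStarAlgAut_apply,
      ← Unitary.coe_mul_star_self hH.1.eigenvectorUnitary]
    simp only [Unitary.coe_star]
    rw [← hU]
    have : U * star U = U * 1 * star U := by rw [Matrix.mul_one]
    rw [this, ← Matrix.sub_mul, ← Matrix.mul_sub]
    congr 1
    congr 1
    rw [← diagonal_one, diagonal_sub]
    rfl
  rw [hdecomp, Matrix.star_eq_conjTranspose]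
  exact (Matrix.PosSemidef.diagonal (fun i => by simpa using hle i)).mul_mul_conjTranspose_same U

theorem det_lamination_matrix_pos {n : ℕ} (μ₀ μ₁ : ℝ) (hμ₀ : 0 < μ₀) (hμ : μ₀ ≤ μ₁)
    (A B H Bsq : Matrix (Fin n) (Fin n) ℝ)
    (hA : A.IsSymm) (hB : B.IsSymm)
    (hAl : (A - μ₀ • (1 : Matrix (Fin n) (Fin n) ℝ)).PosSemidef)
    (hAu : (μ₁ • (1 : Matrix (Fin n) (Fin n) ℝ) - A).PosSemidef)
    (hBl : (B - μ₀ • (1 : Matrix (Fin n) (Fin n) ℝ)).PosSemidef)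
    (hBu : (μ₁ • (1 : Matrix (Fin n) (Fin n) ℝ) - B).PosSemidef)
    (hBsq : Bsq.PosDef) (hBsqB : Bsq * Bsq = B)
    (θ : ℝ) (hθ : θ ∈ Set.Icc (0:ℝ) 1)
    (hH : H.PosSemidef) (htr : H.trace = 1) :
    0 < ((θ * μ₀ + (1 - θ) * μ₁) / μ₁) ^ n ∧
    ((θ * μ₀ + (1 - θ) * μ₁) / μ₁) ^ n ≤
      ((1 : Matrix (Fin n) (Fin n) ℝ) + θ • (Bsq⁻¹ * H * Bsq⁻¹ * (A - B))).det ∧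
    IsUnit ((1 : Matrix (Fin n) (Fin n) ℝ) + θ • (Bsq⁻¹ * H * Bsq⁻¹ * (A - B))) := by
  obtain ⟨hθ0, hθ1⟩ := hθ
  have hμ₁ : (0:ℝ) < μ₁ := lt_of_lt_of_le hμ₀ hμ
  set t : ℝ := (θ * μ₀ + (1 - θ) * μ₁) / μ₁ with hts
  have ht : 0 < t := by
    apply div_pos _ hμ₁
    nlinarith
  obtain ⟨G, hG, hGG⟩ : ∃ G : Matrix (Fin n) (Fin n) ℝ, G.PosSemidef ∧ G * G = H :=
    by
      open scoped MatrixOrder in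
      exact ⟨CFC.sqrt H, (CFC.sqrt_nonneg H).posSemidef, CFC.sqrt_mul_sqrt_self H hH.nonneg⟩
  have hdet' : IsUnit Bsq.det := isUnit_iff_ne_zero.2 (ne_of_gt hBsq.det_pos)
  have h1 : Bsq⁻¹ * Bsq = 1 := nonsing_inv_mul _ hdet'
  have h2 : Bsq * Bsq⁻¹ = 1 := mul_nonsing_inv _ hdet'
  have hC : Bsq⁻¹ᴴ = Bsq⁻¹ := (hBsq.1.inv).eq
  have hGe : Gᴴ = G := hG.1.eq
  have hABh : (A - B)ᴴ = A - B := by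
    rw [conjTranspose_sub, conjTranspose_eq_transpose_of_trivial,
      conjTranspose_eq_transpose_of_trivial, hA, hB]
  -- det identity
  have hXY : (θ • (Bsq⁻¹ * G)) * (G * Bsq⁻¹ * (A - B)) = θ • (Bsq⁻¹ * H * Bsq⁻¹ * (A - B)) := by
    rw [Matrix.smul_mul]
    congr 1
    simp only [Matrix.mul_assoc]
    rw [← Matrix.mul_assoc G G, hGG]
  have hYX : (G * Bsq⁻¹ * (A - B)) * (θ • (Bsq⁻¹ * G))
      = θ • (G * Bsq⁻¹ * (A - B) * Bsq⁻¹ * G) := by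
    rw [Matrix.mul_smul]
    congr 1
    simp only [Matrix.mul_assoc]
  set S : Matrix (Fin n) (Fin n) ℝ := 1 + θ • (G * Bsq⁻¹ * (A - B) * Bsq⁻¹ * G) with hS
  have hdet_eq : ((1 : Matrix (Fin n) (Fin n) ℝ) + θ • (Bsq⁻¹ * H * Bsq⁻¹ * (A - B))).det
      = S.det := by
    rw [← hXY, det_one_add_mul_comm, hYX]
  have hSh : S.IsHermitian := by
    have hmid : (G * Bsq⁻¹ * (A - B) * Bsq⁻¹ * G).IsHermitian := by
      show _ᴴ = _
      simp only [conjTranspose_mul, hC, hGe, hABh, Matrix.mul_assoc]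
    have hsm : (θ • (G * Bsq⁻¹ * (A - B) * Bsq⁻¹ * G)).IsHermitian := by
      show _ᴴ = _
      rw [conjTranspose_smul, star_trivial, hmid]
    exact Matrix.isHermitian_one.add hsm
  have hKB : Bsq⁻¹ * (B * (Bsq⁻¹ * G)) = G := by
    simp [← hBsqB, ← Matrix.mul_assoc, h1, h2]
  have key : S - t • 1 = θ • ((G * Bsq⁻¹) * (A - μ₀ • 1) * ((G * Bsq⁻¹)ᴴ))
      + (θ * μ₀ / μ₁) • (G * ((Bsq⁻¹ᴴ) * (μ₁ • 1 - B) * Bsq⁻¹) * Gᴴ)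
      + (θ * (μ₁ - μ₀) / μ₁) • ((1 : Matrix (Fin n) (Fin n) ℝ) - H) := by
    simp only [conjTranspose_mul, hC, hGe, hS, hts]
    simp only [Matrix.mul_sub, Matrix.sub_mul, Matrix.mul_smul, Matrix.smul_mul, smul_sub,
      sub_smul, Matrix.mul_one, Matrix.one_mul, Matrix.mul_assoc, hKB, hGG]
    match_scalars <;> field_simp <;> ring
  have hpsd : (S - t • 1).PosSemidef := by
    rw [key]
    have p1 := posSemidef_smul' (hAl.mul_mul_conjTranspose_same (G * Bsq⁻¹)) hθ0
    have p2 := posSemidef_smul'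
      ((hBu.conjTranspose_mul_mul_same Bsq⁻¹).mul_mul_conjTranspose_same G)
      (div_nonneg (mul_nonneg hθ0 hμ₀.le) hμ₁.le)
    have p3 := posSemidef_smul' (one_sub_psd' hH htr)
      (div_nonneg (mul_nonneg hθ0 (sub_nonneg.2 hμ)) hμ₁.le)
    exact (p1.add p2).add p3
  have hdS : t ^ n ≤ S.det := det_ge' hSh ht.le hpsd
  refine ⟨pow_pos ht n, ?_, ?_⟩
  · rw [hdet_eq]; exact hdS
  · rw [Matrix.isUnit_iff_isUnit_det]
    have hne : ((1 : Matrix (Fin n) (Fin n) ℝ) + θ • (Bsq⁻¹ * H * Bsq⁻¹ * (A - B))).det ≠ 0 := by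
      rw [hdet_eq]
      exact (lt_of_lt_of_le (pow_pos ht n) hdS).ne'
    exact isUnit_iff_ne_zero.2 hne
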